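/- Let (R, m) be a complete Noetherian local ring, a an ideal, and p a minimal prime of a. If q ∈ Coass_R(\widehat{R_p}) (the p R_p-adic completion of R_p viewed as an R-module), then q ⊆ p. -/

import Mathlib

open CategoryTheory CategoryTheory.Limits IsLocalRing DirectSum

noncomputable section

/-- The inverse system `n ↦ M ⧸ aⁿM` with the natural projection maps. -/
def formalQuotDiagram (R : Type) [CommRing R] (a : Ideal R)
    (M : Type) [AddCommGroup M] [Module R M] : ℕᵒᵖ ⥤ ModuleCat R :=
  CategoryTheory.Functor.ofOpSequence
    (X := fun n => ModuleCat.of R (M ⧸ (a ^ n • ⊤ : Submodule R M)))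
    (fun n => ModuleCat.ofHom (Submodule.mapQ _ _ LinearMap.id (by
      simpa using Submodule.smul_mono (R := R) (M := M) (N := ⊤) (Ideal.pow_le_pow_right (I := a) n.le_succ) le_rfl)))

/-- Formal local cohomology `𝔉ⁱ_a(M) = lim_n Hⁱ_m(M ⧸ aⁿM)`. -/
def formalLocalCohomology (R : Type) [CommRing R] [IsLocalRing R] (a : Ideal R) (i : ℕ)
    (M : Type) [AddCommGroup M] [Module R M] : ModuleCat R :=
  limit (formalQuotDiagram R a M ⋙ localCohomology (maximalIdeal R) i)

/-- Attached primes of a module: primes of the form `Ann(M/N)`. -/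
def attachedPrimes (R : Type) [CommRing R] (M : Type) [AddCommGroup M] [Module R M] :
    Set (Ideal R) :=
  {p | p.IsPrime ∧ ∃ N : Submodule R M, p = Module.annihilator R (M ⧸ N)}

/-- `E` is an injective hull (injective essential extension) of `N`. -/
def IsInjectiveHull (R : Type) [CommRing R] (N : Type) [AddCommGroup N] [Module R N]
    (E : Type) [AddCommGroup E] [Module R E] : Prop :=
  Module.Injective R E ∧ ∃ f : N →ₗ[R] E, Function.Injective f ∧
    ∀ S : Submodule R E, S ≠ ⊥ → S ⊓ LinearMap.range f ≠ ⊥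

/-- The module `⊕_{m maximal} R/m`, whose injective hull is the minimal injective
cogenerator `E_R`. -/
def cogenerator (R : Type) [CommRing R] : Type :=
  ⨁ m : MaximalSpectrum R, R ⧸ m.asIdeal

instance (R : Type) [CommRing R] : AddCommGroup (cogenerator R) := by
  unfold cogenerator; infer_instance

instance (R : Type) [CommRing R] : Module R (cogenerator R) := by
  unfold cogenerator; infer_instance

/-- Richardson's cosupport, via colocalization: `p ∈ CoSupp M` iff
`ᵖM = D_{R_p}((D_R M)_p) ≠ 0`, where `D` denotes duals into minimal injective
cogenerators (injective hulls of the direct sum of the residue fields). -/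
def CoSupport (R : Type) [CommRing R] (M : Type) [AddCommGroup M] [Module R M] :
    Set (PrimeSpectrum R) :=
  {p | ∀ (E : Type) [AddCommGroup E] [Module R E], IsInjectiveHull R (cogenerator R) E →
       ∀ (Ep : Type) [AddCommGroup Ep] [Module (Localization.AtPrime p.asIdeal) Ep],
         IsInjectiveHull (Localization.AtPrime p.asIdeal)
           (cogenerator (Localization.AtPrime p.asIdeal)) Ep →
       Nontrivial ((LocalizedModule p.asIdeal.primeCompl (M →ₗ[R] E))
          →ₗ[Localization.AtPrime p.asIdeal] Ep)}

/-- Coassociated primes over a local ring: `Coass M = Ass Hom_R(M, E(R/m))`. -/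
def Coassociated (R : Type) [CommRing R] [IsLocalRing R]
    (M : Type) [AddCommGroup M] [Module R M] : Set (PrimeSpectrum R) :=
  {p | ∀ (E : Type) [AddCommGroup E] [Module R E],
        IsInjectiveHull R (R ⧸ maximalIdeal R) E →
        p.asIdeal ∈ associatedPrimes R (M →ₗ[R] E)}

/-- The height of an ideal. -/
def idealHeight (R : Type) [CommRing R] (a : Ideal R) : ℕ∞ :=
  sInf {n | ∃ p : PrimeSpectrum R, a ≤ p.asIdeal ∧ Order.height p = n}

/-- The `a`-torsion submodule `H⁰_a(M) = ∪ₙ (0 :_M aⁿ)`. -/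
def idealTorsion (R : Type) [CommRing R] (a : Ideal R)
    (M : Type) [AddCommGroup M] [Module R M] : Submodule R M :=
  ⨆ n : ℕ, Submodule.torsionBySet R M ((a ^ n : Ideal R) : Set R)

/-- A Noetherian local ring is Gorenstein iff it has finite injective dimension
over itself, i.e. `Extⁱ(N, R) = 0` for all `i` larger than some bound and all `N`. -/
def IsGorensteinLocalRing (R : Type) [CommRing R] : Prop :=
  IsNoetherianRing R ∧ IsLocalRing R ∧
    ∃ n : ℕ, ∀ i : ℕ, n < i → ∀ N : ModuleCat R,
      Subsingleton (((Ext R (ModuleCat R) i).obj (Opposite.op N)).obj (ModuleCat.of R R))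

end

section HullExistence

variable {R : Type} [CommRing R]

/-- Every module over a commutative ring has an injective hull. -/
theorem exists_isInjectiveHull (R : Type) [CommRing R] (N : Type) [AddCommGroup N]
    [Module R N] : ∃ (E : Type) (_ : AddCommGroup E) (_ : Module R E),
      IsInjectiveHull R N E := by
  classical
  -- Step 1: embed `N` into an injective module `I`.
  haveI : CategoryTheory.EnoughInjectives (ModuleCat.{0} R) := inferInstance
  let J : ModuleCat R := CategoryTheory.Injective.under (ModuleCat.of R N)
  let I : Type := J
  haveI : CategoryTheory.Injective (ModuleCat.of R I) :=
    CategoryTheory.Injective.injective_under (ModuleCat.of R N)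
  have hI : Module.Injective R I := Module.injective_module_of_injective_object R I
  let f : N →ₗ[R] I := (CategoryTheory.Injective.ι (ModuleCat.of R N)).hom
  have hf : Function.Injective f := by
    have : CategoryTheory.Mono (CategoryTheory.Injective.ι (ModuleCat.of R N)) :=
      inferInstance
    exact (ModuleCat.mono_iff_injective _).mp this
  set K : Submodule R I := LinearMap.range f with hK
  -- the essentiality predicate
  let Ess : Submodule R I → Prop := fun W => K ≤ W ∧
    ∀ y ∈ W, y ≠ 0 → ∃ r : R, r • y ∈ K ∧ r • y ≠ 0
  have hKess : Ess K := ⟨le_rfl, fun y hy hy0 => ⟨1, by simpa using hy, by simpa using hy0⟩⟩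
  -- Step 2 (Zorn): a maximal essential extension `E'` of `K` inside `I`.
  obtain ⟨E', hKE', hE'max⟩ := zorn_le_nonempty₀ {W | Ess W} (fun c hcs hchain y hyc => by
    refine ⟨sSup c, ⟨?_, ?_⟩, fun z hz => le_sSup hz⟩
    · exact le_trans (hcs hyc).1 (le_sSup hyc)
    · intro z hz hz0
      obtain ⟨W, hWc, hzW⟩ := (Submodule.mem_sSup_of_directed ⟨y, hyc⟩
        hchain.directedOn).mp hz
      exact (hcs hWc).2 z hzW hz0) K hKess
  obtain ⟨hKle, hEss⟩ : Ess E' := hE'max.1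
  -- Step 3 (Zorn): a maximal `C` with `C ⊓ E' = ⊥`.
  obtain ⟨C, -, hCmax⟩ := zorn_le_nonempty₀ {C : Submodule R I | C ⊓ E' = ⊥}
    (fun c hcs hchain y hyc => by
      refine ⟨sSup c, ?_, fun z hz => le_sSup hz⟩
      rw [Set.mem_setOf_eq, eq_bot_iff]
      rintro z ⟨hz1, hz2⟩
      obtain ⟨W, hWc, hzW⟩ := (Submodule.mem_sSup_of_directed ⟨y, hyc⟩
        hchain.directedOn).mp hz1
      have : z ∈ W ⊓ E' := ⟨hzW, hz2⟩
      rw [hcs hWc] at this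
      exact this) ⊥ (by simp)
  -- Step 4: extend the inclusion `E' → I` along `E' → I⧸C`.
  let π : I →ₗ[R] I ⧸ C := C.mkQ
  have hi0 : Function.Injective (π ∘ₗ E'.subtype) := by
    rw [← LinearMap.ker_eq_bot, eq_bot_iff]
    rintro ⟨e, he⟩ hker
    have heC : e ∈ C := by simpa [π, Submodule.Quotient.mk_eq_zero] using hker
    have : e ∈ C ⊓ E' := ⟨heC, he⟩
    rw [hCmax.1] at this
    simpa using this
  obtain ⟨h, hh⟩ := hI.out (π ∘ₗ E'.subtype) hi0 E'.subtype
  -- key fact from maximality of C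
  have keyC : ∀ z : I ⧸ C, z ≠ 0 → ∃ (r : R) (e : I), e ∈ E' ∧ e ≠ 0 ∧ r • z = π e := by
    intro z hz0
    obtain ⟨y, rfl⟩ := C.mkQ_surjective z
    have hyC : y ∉ C := fun hc => hz0 (by simpa [π, Submodule.Quotient.mk_eq_zero] using hc)
    have hne : (C ⊔ Submodule.span R {y}) ⊓ E' ≠ ⊥ := by
      intro hbot
      have hle : C ⊔ Submodule.span R {y} ≤ C := hCmax.2 hbot le_sup_left
      exact hyC (hle (Submodule.mem_sup_right (Submodule.mem_span_singleton_self y)))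
    obtain ⟨e, ⟨heCy, heE⟩, he0⟩ := Submodule.ne_bot_iff _ |>.mp hne
    obtain ⟨c, hc, w, hw, hcw⟩ := Submodule.mem_sup.mp heCy
    obtain ⟨r, rfl⟩ := Submodule.mem_span_singleton.mp hw
    refine ⟨r, e, heE, he0, ?_⟩
    have : π e = π c + r • π y := by rw [← map_smul, ← map_add, hcw]
    have hπc : π c = 0 := (Submodule.Quotient.mk_eq_zero C).mpr hc
    rw [this, hπc, zero_add]
  -- Step 5: `range h = E'` by maximality of `E'`.
  have hE'range : E' ≤ LinearMap.range h := by
    intro e he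
    exact ⟨π e, by simpa using hh ⟨e, he⟩⟩
  have hrange : LinearMap.range h ≤ E' := by
    have : Ess (LinearMap.range h) := by
      constructor
      · exact le_trans hKle hE'range
      · rintro y ⟨z, rfl⟩ hy0
        have hz0 : z ≠ 0 := fun hz => hy0 (by rw [hz, map_zero])
        obtain ⟨r, e, heE, he0, hrz⟩ := keyC z hz0
        have hre : r • h z = e := by
          rw [← map_smul, hrz]
          simpa using hh ⟨e, heE⟩
        obtain ⟨s, hsK, hs0⟩ := hEss e heE he0
        exact ⟨s * r, by rw [mul_smul, hre]; exact hsK, by rw [mul_smul, hre]; exact hs0⟩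
    exact hE'max.2 this hE'range
  -- Step 6: `E'` is a retract of `I`, hence injective.
  let ρ : I →ₗ[R] I := h ∘ₗ π
  have hρE : ∀ y : I, ρ y ∈ E' := fun y => hrange ⟨π y, rfl⟩
  have hρid : ∀ e ∈ E', ρ e = e := fun e he => by simpa [ρ] using hh ⟨e, he⟩
  refine ⟨E', inferInstance, inferInstance, ⟨?_, ?_⟩⟩
  · -- injectivity of E'
    constructor
    intro X Y _ _ _ _ f1 hf1 g1
    obtain ⟨h1, hh1⟩ := hI.out f1 hf1 (E'.subtype ∘ₗ g1)
    refine ⟨LinearMap.codRestrict E' (ρ ∘ₗ h1) (fun y => hρE _), fun x => ?_⟩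
    apply Subtype.ext
    have : h1 (f1 x) = (g1 x : I) := hh1 x
    simp only [LinearMap.codRestrict_apply, LinearMap.comp_apply, this]
    exact hρid _ (g1 x).2
  · -- essential extension of N
    refine ⟨LinearMap.codRestrict E' f (fun n => hKle ⟨n, rfl⟩), ?_, ?_⟩
    · intro a b hab
      exact hf (congrArg Subtype.val hab)
    · intro S hS
      obtain ⟨y, hyS, hy0⟩ := Submodule.ne_bot_iff S |>.mp hS
      have hy0' : (y : I) ≠ 0 := fun hc => hy0 (Subtype.ext hc)
      obtain ⟨r, hrK, hr0⟩ := hEss (y : I) y.2 hy0'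
      rw [Submodule.ne_bot_iff]
      obtain ⟨n, hn⟩ := hrK
      refine ⟨r • y, ⟨S.smul_mem r hyS, ⟨n, ?_⟩⟩, fun hc => hr0 ?_⟩
      · apply Subtype.ext
        simpa using hn
      · have : ((r • y : E') : I) = 0 := by rw [hc]; rfl
        simpa only [Submodule.coe_smul] using this

end HullExistence

/-- over a complete Noetherian local ring, if `p` is a minimal prime
of `a` and `q ∈ Coass_R (p R_p-adic completion of R_p)`, then `q ⊆ p`. -/
theorem stmt18 (R : Type) [CommRing R] [IsNoetherianRing R] [IsLocalRing R]
    [IsAdicComplete (IsLocalRing.maximalIdeal R) R]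
    (a : Ideal R) (p : PrimeSpectrum R) (hap : a ≤ p.asIdeal)
    (hmin : ∀ r : PrimeSpectrum R, a ≤ r.asIdeal → r.asIdeal ≤ p.asIdeal →
      r.asIdeal = p.asIdeal)
    (q : PrimeSpectrum R)
    (hq : q ∈ @Coassociated R _ _ (RestrictScalars R (Localization.AtPrime p.asIdeal)
      (AdicCompletion
        (Ideal.map (algebraMap R (Localization.AtPrime p.asIdeal)) p.asIdeal)
        (Localization.AtPrime p.asIdeal))) _ (@RestrictScalars.module _ _ _ _ AddCommGroup.toAddCommMonoid _ _ _)) :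
    q.asIdeal ≤ p.asIdeal := by
  classical
  set L := Localization.AtPrime p.asIdeal
  set M0 := AdicCompletion
    (Ideal.map (algebraMap R L) p.asIdeal) L with hM0
  set M := RestrictScalars R L M0 with hM
  obtain ⟨E, hAG, hMod, hE⟩ := exists_isInjectiveHull R (R ⧸ IsLocalRing.maximalIdeal R)
  have hass : q.asIdeal ∈ associatedPrimes R (M →ₗ[R] E) := hq E hE
  obtain ⟨hprime, x, hx⟩ := hass
  intro s hsq
  by_contra hsp
  -- `s` acts invertibly on `M`
  have hu : IsUnit (algebraMap R L s) :=
    IsLocalization.map_units L (⟨s, hsp⟩ : p.asIdeal.primeCompl)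
  have key : ∀ m : M, ∃ m' : M, s • m' = m := by
    intro m
    refine ⟨(RestrictScalars.addEquiv R L M0).symm
      (((hu.unit⁻¹ : Lˣ) : L) • (RestrictScalars.addEquiv R L M0 m)), ?_⟩
    rw [RestrictScalars.smul_def]
    rw [AddEquiv.apply_symm_apply, smul_smul]
    rw [hu.mul_val_inv, one_smul]
    exact AddEquiv.symm_apply_apply _ _
  -- `s • x = 0`, so `x = 0`
  have hsx : ∃ n : ℕ, s ^ n • x = 0 := by
    rw [hx] at hsq
    obtain ⟨n, hn⟩ := hsq
    exact ⟨n, (Submodule.mem_bot R).mp (Submodule.mem_colon_singleton.mp hn)⟩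
  have keyn : ∀ (k : ℕ) (m : M), ∃ m' : M, s ^ k • m' = m := by
    intro k
    induction k with
    | zero => intro m; exact ⟨m, by simp⟩
    | succ k ih =>
      intro m
      obtain ⟨m1, rfl⟩ := key m
      obtain ⟨m2, rfl⟩ := ih m1
      exact ⟨m2, by rw [pow_succ', mul_smul]⟩
  have hx0 : x = 0 := by
    obtain ⟨n, hn⟩ := hsx
    ext m
    obtain ⟨m', rfl⟩ := keyn n m
    show x (s ^ n • m') = (0 : M →ₗ[R] E) m'
    rw [LinearMap.zero_apply, map_smul, ← LinearMap.smul_apply, hn, LinearMap.zero_apply]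
  apply hprime.ne_top
  rw [hx, hx0, eq_top_iff]
  intro r _
  exact Ideal.le_radical (Submodule.mem_colon_singleton.mpr (by simp))
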